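/- Let $S \subseteq \mathbb{F}_q[X]^b$ be an $\mathbb{F}_q$-linear subspace of tuples of polynomials each of degree less than $k$, and let $D = \dim_{\mathbb{F}_q(X)} \operatorname{span}_{\mathbb{F}_q(X)}(S)$. If $\alpha$ is sampled uniformly from $\mathbb{F}_q$, then with probability at least $1 - Dk/q$, the image of $S$ under the evaluation map $(P_1, \ldots, P_b) \mapsto (P_1(\alpha), \ldots, P_b(\alpha))$ has $\mathbb{F}_q$-dimension exactly $D$. -/

import Mathlib

set_option maxHeartbeats 1000000
set_option synthInstance.maxHeartbeats 1000000


/-- Evaluation at `α`, as an `F`-linear map on `b`-tuples of polynomials. -/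
def evalMap (F : Type) [CommSemiring F] (b : ℕ) (α : F) :
    (Fin b → Polynomial F) →ₗ[F] (Fin b → F) where
  toFun v i := (v i).eval α
  map_add' u v := by funext i; simp
  map_smul' c v := by funext i; simp

open Polynomial Module Submodule in
/-- If a family of polynomial tuples is linearly dependent over `RatFunc F`, there is a
nontrivial polynomial linear relation. -/
theorem key_dep {F : Type} [Field F] {b n : ℕ} (v : Fin n → (Fin b → Polynomial F))
    (h : ¬ LinearIndependent (RatFunc F)
      (fun j (i : Fin b) => algebraMap (Polynomial F) (RatFunc F) (v j i))) :
    ∃ p : Fin n → Polynomial F, (∃ j, p j ≠ 0) ∧ ∀ i, ∑ j, p j * v j i = 0 := by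
  classical
  obtain ⟨g, hg, j₀, hj₀⟩ := Fintype.not_linearIndependent_iff.mp h
  obtain ⟨d, hd⟩ := IsLocalization.exist_integer_multiples_of_finite
    (nonZeroDivisors (Polynomial F)) g
  choose p hp using hd
  have hinj : Function.Injective (algebraMap (Polynomial F) (RatFunc F)) :=
    IsFractionRing.injective _ _
  have hdne : algebraMap (Polynomial F) (RatFunc F) (d : Polynomial F) ≠ 0 := by
    simpa [map_eq_zero_iff _ hinj] using nonZeroDivisors.coe_ne_zero d
  have hsmul : ∀ j, algebraMap (Polynomial F) (RatFunc F) (p j)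
      = algebraMap (Polynomial F) (RatFunc F) (d : Polynomial F) * g j := by
    intro j
    rw [hp j, Algebra.smul_def]
  refine ⟨p, ⟨j₀, ?_⟩, ?_⟩
  · intro h0
    apply hj₀
    have := hsmul j₀
    rw [h0, map_zero] at this
    exact (mul_eq_zero.mp this.symm).resolve_left hdne
  · intro i
    apply hinj
    rw [map_zero, map_sum (algebraMap (Polynomial F) (RatFunc F)) (fun j => p j * v j i)
      Finset.univ]
    have hgi : ∑ j, g j * algebraMap (Polynomial F) (RatFunc F) (v j i) = 0 := by
      have := congrFun hg i
      simpa [Finset.sum_apply, Pi.smul_apply, smul_eq_mul] using this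
    calc ∑ j, algebraMap (Polynomial F) (RatFunc F) (p j * v j i)
        = ∑ j, algebraMap (Polynomial F) (RatFunc F) (d : Polynomial F)
            * (g j * algebraMap (Polynomial F) (RatFunc F) (v j i)) := by
          refine Finset.sum_congr rfl fun j _ => ?_
          rw [map_mul, hsmul j]; ring
      _ = algebraMap (Polynomial F) (RatFunc F) (d : Polynomial F)
            * ∑ j, g j * algebraMap (Polynomial F) (RatFunc F) (v j i) := by
          rw [Finset.mul_sum]
      _ = 0 := by rw [hgi, mul_zero]

open Polynomial in
/-- Dependence over `RatFunc F` implies dependence of the evaluations at any point. -/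
theorem key_dep_eval {F : Type} [Field F] {b n : ℕ} (hn : 0 < n) (α : F)
    (v : Fin n → (Fin b → Polynomial F))
    (h : ¬ LinearIndependent (RatFunc F)
      (fun j (i : Fin b) => algebraMap (Polynomial F) (RatFunc F) (v j i))) :
    ¬ LinearIndependent F (fun j (i : Fin b) => (v j i).eval α) := by
  classical
  obtain ⟨p, ⟨j₀, hj₀⟩, hsum⟩ := key_dep v h
  have hne : (Finset.univ : Finset (Fin n)).Nonempty := ⟨⟨0, hn⟩, Finset.mem_univ _⟩
  have hgcd : (Finset.univ : Finset (Fin n)).gcd p ≠ 0 := by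
    intro h0
    exact hj₀ (Finset.gcd_eq_zero_iff.mp h0 j₀ (Finset.mem_univ _))
  obtain ⟨q, hq, hq1⟩ := Finset.extract_gcd p hne
  have hsum' : ∀ i, ∑ j, q j * v j i = 0 := by
    intro i
    have hzero : (Finset.univ : Finset (Fin n)).gcd p * (∑ j, q j * v j i) = 0 := by
      rw [Finset.mul_sum, ← hsum i]
      refine Finset.sum_congr rfl fun j _ => ?_
      rw [hq j (Finset.mem_univ j)]; ring
    exact (mul_eq_zero.mp hzero).resolve_left hgcd
  have hroot : ∃ j, (q j).eval α ≠ 0 := by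
    by_contra hall
    push_neg at hall
    have hdvd : (X - C α) ∣ (Finset.univ : Finset (Fin n)).gcd q :=
      Finset.dvd_gcd fun j _ => (dvd_iff_isRoot).mpr (hall j)
    rw [hq1] at hdvd
    exact Polynomial.not_isUnit_X_sub_C α (isUnit_of_dvd_one hdvd)
  obtain ⟨j₁, hj₁⟩ := hroot
  rw [Fintype.not_linearIndependent_iff]
  refine ⟨fun j => (q j).eval α, ?_, ⟨j₁, hj₁⟩⟩
  funext i
  have : ∑ j, (q j).eval α * (v j i).eval α = 0 := by
    have := congrArg (Polynomial.eval α) (hsum' i)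
    simpa [Polynomial.eval_finset_sum] using this
  simpa [Finset.sum_apply] using this

/-- `natDegree` bound for determinants of polynomial matrices. -/
theorem natDegree_det_le_of {R : Type} [CommRing R] {n : ℕ} (M : Matrix (Fin n) (Fin n) (Polynomial R))
    (m : ℕ) (h : ∀ i j, (M i j).natDegree ≤ m) : M.det.natDegree ≤ n * m := by
  rw [Matrix.det_apply]
  refine Polynomial.natDegree_sum_le_of_forall_le _ _ fun σ _ => ?_
  rw [Units.smul_def, zsmul_eq_mul]
  refine le_trans (Polynomial.natDegree_mul_le) ?_
  rw [Polynomial.natDegree_intCast, zero_add]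
  refine le_trans (Polynomial.natDegree_prod_le _ _) ?_
  calc ∑ j : Fin n, (M (σ j) j).natDegree ≤ ∑ _j : Fin n, m :=
        Finset.sum_le_sum fun j _ => h _ _
    _ = n * m := by simp [Finset.sum_const, mul_comm]

open Module Submodule in
/-- A linearly independent finite family inside a submodule bounds its `finrank` below. -/
theorem card_le_finrank_of_mem {F V : Type} [Field F] [AddCommGroup V] [Module F V]
    [Module.Finite F V] {n : ℕ} (U : Submodule F V) (u : Fin n → V)
    (hu : LinearIndependent F u) (hmem : ∀ j, u j ∈ U) :
    n ≤ Module.finrank F U := by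
  let u' : Fin n → U := fun j => ⟨u j, hmem j⟩
  have hu' : LinearIndependent F u' := by
    apply LinearIndependent.of_comp U.subtype
    exact hu
  simpa using hu'.fintype_card_le_finrank

open Module Submodule in
/-- Upper bound: the evaluated image has dimension at most `D`, for every `α`. -/
theorem eval_finrank_le {F : Type} [Field F] {b : ℕ}
    (S : Submodule F (Fin b → Polynomial F)) (D : ℕ)
    (hD : D = Module.finrank (RatFunc F) ↥(Submodule.span (RatFunc F)
      ((fun (v : Fin b → Polynomial F) (i : Fin b) =>
          algebraMap (Polynomial F) (RatFunc F) (v i)) '' (S : Set (Fin b → Polynomial F)))))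
    (α : F) :
    Module.finrank F ↥(S.map (evalMap F b α)) ≤ D := by
  classical
  by_contra hlt
  push_neg at hlt
  set U := S.map (evalMap F b α) with hU
  have hcard : D + 1 ≤ finrank F U := hlt
  -- get D+1 independent vectors in U
  haveI : Module.Finite F ↥U := inferInstance
  haveI : Module.Free F ↥U := Module.Free.of_divisionRing F ↥U
  have B := Module.finBasis F U
  let u : Fin (D + 1) → U := fun j => B (Fin.castLE hcard j)
  have hu : LinearIndependent F u :=
    B.linearIndependent.comp _ (Fin.castLE_injective hcard)
  have hu' : LinearIndependent F (fun j => (u j : Fin b → F)) := by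
    exact hu.map' U.subtype (Submodule.ker_subtype U)
  have hmem : ∀ j, (u j : Fin b → F) ∈ U := fun j => (u j).2
  have hmem' : ∀ j, ∃ v ∈ S, evalMap F b α v = (u j : Fin b → F) := by
    intro j
    exact Submodule.mem_map.mp (hmem j)
  choose v hvS hv using hmem'
  -- these cannot be independent over RatFunc F
  have hnotL : ¬ LinearIndependent (RatFunc F)
      (fun j (i : Fin b) => algebraMap (Polynomial F) (RatFunc F) (v j i)) := by
    intro hind
    set T := Submodule.span (RatFunc F)
      ((fun (w : Fin b → Polynomial F) (i : Fin b) =>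
          algebraMap (Polynomial F) (RatFunc F) (w i)) '' (S : Set (Fin b → Polynomial F)))
    have hmemT : ∀ j, (fun i : Fin b => algebraMap (Polynomial F) (RatFunc F) (v j i)) ∈ T :=
      fun j => Submodule.subset_span ⟨v j, hvS j, rfl⟩
    have hle := card_le_finrank_of_mem T _ hind hmemT
    omega
  have := key_dep_eval (Nat.succ_pos D) α v hnotL
  apply this
  have : (fun j (i : Fin b) => (v j i).eval α) = fun j => (u j : Fin b → F) := by
    funext j
    rw [← hv j]
    rfl
  rw [this]
  exact hu'

open scoped Classical in
theorem stmt7 (F : Type) [Field F] [Fintype F] (q b k D : ℕ)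
    (hq : Fintype.card F = q)
    (S : Submodule F (Fin b → Polynomial F))
    (hdeg : ∀ v ∈ S, ∀ i, (v i).degree < (k : ℕ))
    (hD : D = Module.finrank (RatFunc F) ↥(Submodule.span (RatFunc F)
      ((fun (v : Fin b → Polynomial F) (i : Fin b) =>
          algebraMap (Polynomial F) (RatFunc F) (v i)) '' (S : Set (Fin b → Polynomial F))))) :
    1 - (D * k : ℝ) / (q : ℝ) ≤
      ((Finset.univ.filter fun α : F =>
          Module.finrank F ↥(S.map (evalMap F b α)) = D).card : ℝ) / (q : ℝ) := by
  have hq0 : 0 < q := hq ▸ Fintype.card_pos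
  have hupper : ∀ α : F, Module.finrank F ↥(S.map (evalMap F b α)) ≤ D :=
    eval_finrank_le S D hD
  -- the key counting fact in ℕ
  suffices hcount : q ≤ (Finset.univ.filter fun α : F =>
      Module.finrank F ↥(S.map (evalMap F b α)) = D).card + D * k by
    have hq0' : (0 : ℝ) < (q : ℝ) := by exact_mod_cast hq0
    rw [sub_le_iff_le_add, ← add_div, le_div_iff₀ hq0', one_mul]
    exact_mod_cast hcount
  rcases Nat.eq_zero_or_pos D with hD0 | hDpos
  · subst hD0
    have : (Finset.univ.filter fun α : F =>
        Module.finrank F ↥(S.map (evalMap F b α)) = 0) = Finset.univ := by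
      refine Finset.filter_true_of_mem fun α _ => ?_
      exact Nat.le_zero.mp (hupper α)
    rw [this, Finset.card_univ, hq]
    exact Nat.le_add_right _ _
  -- now D ≥ 1; first get k ≥ 1
  have hk1 : 1 ≤ k := by
    by_contra hk
    push_neg at hk
    interval_cases k
    have hS0 : ∀ v ∈ S, v = (0 : Fin b → Polynomial F) := by
      intro v hv
      funext i
      have := hdeg v hv i
      by_contra h0
      exact absurd this (not_lt.mpr (by
        simpa using Polynomial.zero_le_degree_iff.mpr h0))
    have himg : ((fun (v : Fin b → Polynomial F) (i : Fin b) =>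
        algebraMap (Polynomial F) (RatFunc F) (v i)) '' (S : Set (Fin b → Polynomial F)))
        ⊆ {0} := by
      rintro x ⟨v, hv, rfl⟩
      rw [Set.mem_singleton_iff]
      funext i
      rw [hS0 v hv]
      simp
    have : Submodule.span (RatFunc F)
        ((fun (v : Fin b → Polynomial F) (i : Fin b) =>
          algebraMap (Polynomial F) (RatFunc F) (v i)) '' (S : Set (Fin b → Polynomial F))) = ⊥ := by
      rw [← Submodule.span_zero_singleton (R := RatFunc F) (M := Fin b → RatFunc F)]
      refine le_antisymm (Submodule.span_mono himg) ?_
      simp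
    rw [this, finrank_bot] at hD
    omega
  classical
  -- Setup: T, and a family w of D elements of S whose RatFunc-images are independent
  set A : (Fin b → Polynomial F) → (Fin b → RatFunc F) :=
    fun v i => algebraMap (Polynomial F) (RatFunc F) (v i) with hA
  set T := Submodule.span (RatFunc F) (A '' (S : Set (Fin b → Polynomial F))) with hT
  obtain ⟨t, hts, htspan, htind⟩ := exists_linearIndependent (RatFunc F)
    (A '' (S : Set (Fin b → Polynomial F)))
  haveI : Finite ↥t := htind.finite
  haveI : Fintype ↥t := Fintype.ofFinite _
  have htcard : Fintype.card ↥t = D := by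
    have h1 := finrank_span_set_eq_card htind
    rw [htspan, ← hT, ← hD] at h1
    rw [← Set.toFinset_card, ← h1]
  let e : ↥t ≃ Fin D := Fintype.equivFinOfCardEq htcard
  have hy : ∀ j : Fin D, ((e.symm j : Fin b → RatFunc F)) ∈ A '' (S : Set _) :=
    fun j => hts (e.symm j).2
  choose w hwS hw using hy
  have hwind : LinearIndependent (RatFunc F) (fun j : Fin D => A (w j)) := by
    have : (fun j : Fin D => A (w j)) = (Subtype.val : ↥t → (Fin b → RatFunc F)) ∘ e.symm := by
      funext j; rw [hw j]; rfl
    rw [this]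
    exact htind.comp e.symm e.symm.injective
  -- Matrix over RatFunc F and column extraction
  set N : Matrix (Fin D) (Fin b) (RatFunc F) := Matrix.of fun j i => A (w j) i with hN
  have hNind : LinearIndependent (RatFunc F) N := hwind
  have hNrank : N.rank = D := by
    rw [hNind.rank_matrix, Fintype.card_fin]
  have hspanCols : Module.finrank (RatFunc F)
      (Submodule.span (RatFunc F) (Set.range (Matrix.transpose N))) = D := by
    exact (Matrix.rank_eq_finrank_span_cols N).symm.trans hNrank
  obtain ⟨s, hs_sub, hs_span, hs_ind⟩ := exists_linearIndependent (RatFunc F) (Set.range (Matrix.transpose N))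
  haveI : Finite ↥s := hs_ind.finite
  haveI : Fintype ↥s := Fintype.ofFinite _
  have hscard : Fintype.card ↥s = D := by
    have h1 := finrank_span_set_eq_card hs_ind
    rw [hs_span, hspanCols] at h1
    rw [← Set.toFinset_card, ← h1]
  let e2 : ↥s ≃ Fin D := Fintype.equivFinOfCardEq hscard
  have hc : ∀ j' : Fin D, ∃ i : Fin b, (Matrix.transpose N) i = (e2.symm j' : Fin D → RatFunc F) :=
    fun j' => hs_sub (e2.symm j').2
  choose c hcspec using hc
  have hcind : LinearIndependent (RatFunc F) (fun j' : Fin D => (Matrix.transpose N) (c j')) := by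
    have : (fun j' : Fin D => (Matrix.transpose N) (c j'))
        = (Subtype.val : ↥s → (Fin D → RatFunc F)) ∘ e2.symm := by
      funext j'; rw [hcspec j']; rfl
    rw [this]
    exact hs_ind.comp e2.symm e2.symm.injective
  set Q : Matrix (Fin D) (Fin D) (RatFunc F) := N.submatrix id c with hQ
  have hQunit : IsUnit Q := by
    rw [← Matrix.linearIndependent_cols_iff_isUnit]
    exact hcind
  have hQdet : Q.det ≠ 0 := by
    intro h0
    have := (Matrix.isUnit_iff_isUnit_det Q).mp hQunit
    rw [h0] at this
    exact this.ne_zero rfl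
  -- The polynomial P
  set M : Matrix (Fin D) (Fin D) (Polynomial F) := Matrix.of fun j j' => w j (c j') with hM
  set P : Polynomial F := M.det with hP
  have hPQ : algebraMap (Polynomial F) (RatFunc F) P = Q.det := by
    rw [hP, RingHom.map_det]
    congr 1
  have hP0 : P ≠ 0 := by
    intro h0
    apply hQdet
    rw [← hPQ, h0, map_zero]
  -- degree bound
  have hMdeg : ∀ j j', (M j j').natDegree ≤ k - 1 := by
    intro j j'
    have hdlt := hdeg (w j) (hwS j) (c j')
    by_cases h0 : w j (c j') = 0
    · simp [hM, h0]
    · have : (w j (c j')).natDegree < k :=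
        (Polynomial.natDegree_lt_iff_degree_lt h0).mpr hdlt
      simp only [hM, Matrix.of_apply]
      omega
  have hPdeg : P.natDegree ≤ D * k := by
    rw [hP]
    have h1 := natDegree_det_le_of M (k - 1) hMdeg
    have h3 : D * (k - 1) ≤ D * k := Nat.mul_le_mul_left D (Nat.sub_le k 1)
    omega
  -- good α give finrank = D
  have hgood : ∀ α : F, P.eval α ≠ 0 →
      Module.finrank F ↥(S.map (evalMap F b α)) = D := by
    intro α hPα
    refine le_antisymm (hupper α) ?_
    set Mα : Matrix (Fin D) (Fin D) F := Matrix.of fun j j' => (w j (c j')).eval α with hMα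
    have hMαdet : Mα.det = P.eval α := by
      rw [hP, ← Polynomial.coe_evalRingHom, RingHom.map_det]
      congr 1
    have hMαunit : IsUnit Mα := by
      rw [Matrix.isUnit_iff_isUnit_det, hMαdet]
      exact hPα.isUnit
    have hrows : LinearIndependent F (fun j : Fin D => Mα j) :=
      Matrix.linearIndependent_rows_iff_isUnit.mpr hMαunit
    set u : Fin D → (Fin b → F) := fun j i => (w j i).eval α with hu
    have huind : LinearIndependent F u := by
      apply LinearIndependent.of_comp (LinearMap.funLeft F F c)
      exact hrows
    have humem : ∀ j, u j ∈ S.map (evalMap F b α) := by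
      intro j
      exact Submodule.mem_map_of_mem (hwS j)
    exact card_le_finrank_of_mem _ u huind humem
  -- counting
  have hsubset : (Finset.univ.filter fun α : F => P.eval α = 0) ⊆ P.roots.toFinset := by
    intro α hα
    rw [Finset.mem_filter] at hα
    rw [Multiset.mem_toFinset, Polynomial.mem_roots hP0]
    exact hα.2
  have hbad : (Finset.univ.filter fun α : F => P.eval α = 0).card ≤ D * k := by
    calc (Finset.univ.filter fun α : F => P.eval α = 0).card
        ≤ P.roots.toFinset.card := Finset.card_le_card hsubset
      _ ≤ Multiset.card P.roots := Multiset.toFinset_card_le _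
      _ ≤ P.natDegree := Polynomial.card_roots' P
      _ ≤ D * k := hPdeg
  have hgoodsub : (Finset.univ.filter fun α : F => ¬ P.eval α = 0) ⊆
      (Finset.univ.filter fun α : F =>
        Module.finrank F ↥(S.map (evalMap F b α)) = D) := by
    intro α hα
    rw [Finset.mem_filter] at hα ⊢
    exact ⟨hα.1, hgood α hα.2⟩
  have hsplit := Finset.card_filter_add_card_filter_not
    (s := (Finset.univ : Finset F)) (p := fun α : F => P.eval α = 0)
  rw [Finset.card_univ, hq] at hsplit
  have := Finset.card_le_card hgoodsub
  omega
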